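/- Let P be a monic polynomial of degree 2s over ℂ with roots z_1, 1/z_1, z_2, 1/z_2, ..., z_s, 1/z_s (with multiplicity), where each z_j ≠ 0. Then for every positive integer n, the product ∏_{j=0}^{n-1} P(ε^j) over all n-th roots of unity ε^j equals (-1)^s ∏_{j=1}^{s} (2·T_n(w_j) - 2), where w_j = (1/2)(z_j + z_j^{-1}) and T_n is the n-th Chebyshev polynomial of the first kind. -/
import Mathlib


open Polynomial Real

-- Chebyshev helper
lemma cheb_helper (z : ℂ) (hz : z ≠ 0) (n : ℕ) :
    2 * (Polynomial.Chebyshev.T ℂ n).eval ((1 / 2 : ℂ) * (z + z⁻¹)) - 2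
      = z ^ n + (z⁻¹) ^ n - 2 := by
  set θ : ℂ := -Complex.I * Complex.log z with hθ
  have h1 : Complex.exp (θ * Complex.I) = z := by
    rw [hθ]; rw [show -Complex.I * Complex.log z * Complex.I
      = Complex.log z * (Complex.I * -Complex.I) by ring]
    simp [Complex.I_mul_I, Complex.exp_log hz]
  have hcos : Complex.cos θ = (1 / 2 : ℂ) * (z + z⁻¹) := by
    rw [Complex.cos, h1, show -θ * Complex.I = -(θ * Complex.I) by ring,
      Complex.exp_neg, h1]; ring
  have hcosn : Complex.cos ((n : ℂ) * θ) = (1 / 2 : ℂ) * (z ^ n + (z⁻¹) ^ n) := by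
    rw [Complex.cos, show (n : ℂ) * θ * Complex.I = (n : ℕ) * (θ * Complex.I) by ring,
      Complex.exp_nat_mul, h1,
      show -((n : ℂ) * θ) * Complex.I = (n : ℕ) * (-(θ * Complex.I)) by ring,
      Complex.exp_nat_mul, Complex.exp_neg, h1]
    ring
  rw [← hcos, Polynomial.Chebyshev.T_complex_cos θ n]
  push_cast at hcosn ⊢
  rw [hcosn]; ring

lemma prod_root_pow (ζ : ℂ) {n : ℕ} (hζ : IsPrimitiveRoot ζ n) (hn : 0 < n) (x : ℂ) :
    ∏ k ∈ Finset.range n, (x - ζ ^ k) = x ^ n - 1 := by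
  have := X_pow_sub_C_eq_prod hζ hn (one_pow n)
  have := congrArg (Polynomial.eval x) this
  simpa [eval_prod] using this.symm

lemma key_pair {n : ℕ} (ζ : ℂ) (hζ : IsPrimitiveRoot ζ n) (hn : 0 < n)
    (w : ℂ) (hw : w ≠ 0) :
    (∏ k ∈ Finset.range n, (ζ ^ k - w)) * (∏ k ∈ Finset.range n, (ζ ^ k - w⁻¹))
      = -(w ^ n + (w⁻¹) ^ n - 2) := by
  have h1 : ∀ u : ℂ, ∏ k ∈ Finset.range n, (ζ ^ k - u) = (-1) ^ n * (u ^ n - 1) := by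
    intro u
    have : ∀ k ∈ Finset.range n, ζ ^ k - u = (-1) * (u - ζ ^ k) := fun k _ => by ring
    rw [Finset.prod_congr rfl this, Finset.prod_mul_distrib, Finset.prod_const,
      Finset.card_range, prod_root_pow ζ hζ hn]
  have e1 : ((-1 : ℂ)) ^ n * (-1 : ℂ) ^ n = 1 := by
    rw [← pow_add]; exact Even.neg_one_pow ⟨n, rfl⟩
  have hwn : w ^ n * (w⁻¹) ^ n = 1 := by
    rw [← mul_pow, mul_inv_cancel₀ hw, one_pow]
  rw [h1 w, h1 w⁻¹]
  calc (-1 : ℂ) ^ n * (w ^ n - 1) * ((-1) ^ n * ((w⁻¹) ^ n - 1))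
      = ((-1 : ℂ) ^ n * (-1) ^ n) * ((w ^ n - 1) * ((w⁻¹) ^ n - 1)) := by ring
    _ = (w ^ n - 1) * ((w⁻¹) ^ n - 1) := by rw [e1, one_mul]
    _ = -(w ^ n + (w⁻¹) ^ n - 2) := by linear_combination hwn


/-- If `P` is a monic polynomial of degree `2s` over `ℂ` whose roots (with
multiplicity) are `z_1, 1/z_1, …, z_s, 1/z_s` with all `z_j ≠ 0`, then for every
`n > 0`, `∏_{j=0}^{n-1} P(εⁿʲ) = (-1)^s ∏_{j=1}^{s} (2 T_n(w_j) - 2)` where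
`w_j = (z_j + z_j⁻¹)/2` and `ε = exp(2πi/n)`. -/
theorem prod_eval_roots_of_unity_eq_chebyshev {s : ℕ} (P : Polynomial ℂ)
    (hmonic : P.Monic) (hdeg : P.natDegree = 2 * s)
    (z : Fin s → ℂ) (hz : ∀ j, z j ≠ 0)
    (hroots : P.roots =
      (Finset.univ.val.map z) + (Finset.univ.val.map fun j => (z j)⁻¹))
    (n : ℕ) (hn : 0 < n) :
    ∏ j ∈ Finset.range n, P.eval ((Complex.exp (2 * π * Complex.I / n)) ^ j) =
      (-1) ^ s * ∏ j : Fin s,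
        (2 * (Polynomial.Chebyshev.T ℂ n).eval ((1 / 2 : ℂ) * (z j + (z j)⁻¹)) - 2) := by
  set ζ : ℂ := Complex.exp (2 * π * Complex.I / n) with hζdef
  have hζ : IsPrimitiveRoot ζ n := Complex.isPrimitiveRoot_exp n hn.ne'
  have hcard : P.roots.card = P.natDegree := by
    rw [hroots, hdeg]; simp [two_mul]
  have hfac := prod_multiset_X_sub_C_of_monic_of_roots_card_eq hmonic hcard
  have heval : ∀ x : ℂ, P.eval x = (∏ j, (x - z j)) * (∏ j, (x - (z j)⁻¹)) := by
    intro x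
    conv_lhs => rw [← hfac]
    rw [eval_multiset_prod, hroots]
    simp only [Multiset.map_add, Multiset.prod_add, Multiset.map_map]
    rw [Finset.prod_eq_multiset_prod, Finset.prod_eq_multiset_prod]
    simp [Function.comp_def]
  calc ∏ k ∈ Finset.range n, P.eval (ζ ^ k)
      = ∏ k ∈ Finset.range n, ((∏ j, (ζ ^ k - z j)) * (∏ j, (ζ ^ k - (z j)⁻¹))) := by
        simp only [heval]
    _ = ∏ j, ((∏ k ∈ Finset.range n, (ζ ^ k - z j)) *
          (∏ k ∈ Finset.range n, (ζ ^ k - (z j)⁻¹))) := by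
        simp only [Finset.prod_mul_distrib]
        congr 1 <;> exact Finset.prod_comm
    _ = ∏ j, -((z j) ^ n + ((z j)⁻¹) ^ n - 2) := by
        exact Finset.prod_congr rfl fun j _ => key_pair ζ hζ hn (z j) (hz j)
    _ = (-1) ^ s * ∏ j : Fin s,
        (2 * (Polynomial.Chebyshev.T ℂ n).eval ((1 / 2 : ℂ) * (z j + (z j)⁻¹)) - 2) := by
        have h2 : ∀ j : Fin s,
            2 * (Polynomial.Chebyshev.T ℂ n).eval ((1 / 2 : ℂ) * (z j + (z j)⁻¹)) - 2
              = (z j) ^ n + ((z j)⁻¹) ^ n - 2 := fun j => cheb_helper (z j) (hz j) n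
        simp_rw [h2]
        have h3 : ∀ j ∈ (Finset.univ : Finset (Fin s)),
            -((z j) ^ n + ((z j)⁻¹) ^ n - 2)
              = (-1 : ℂ) * ((z j) ^ n + ((z j)⁻¹) ^ n - 2) := fun j _ => by ring
        rw [Finset.prod_congr rfl h3, Finset.prod_mul_distrib, Finset.prod_const,
          Finset.card_univ, Fintype.card_fin]
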